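/- For every p with 1/2 < p < 5/6: π₃(y) > y for all y ∈ [0, 1/2) and π₃(y) < y for all y ∈ (1/2, 1]; that is, the urn function down-crosses the diagonal at the unique fixed point 1/2. -/
import Mathlib


/-- The urn function of the ERW with `k = 3` extractions:
`π₃(y) = (1-p) + (2p-1)(3y² - 2y³)`. -/
noncomputable def pi3 (p y : ℝ) : ℝ :=
  (1 - p) + (2 * p - 1) * (3 * y ^ 2 - 2 * y ^ 3)

theorem stmt_14 (p : ℝ) (hp0 : 1 / 2 < p) (hp1 : p < 5 / 6) :
    (∀ y : ℝ, 0 ≤ y → y < 1 / 2 → y < pi3 p y) ∧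
    (∀ y : ℝ, 1 / 2 < y → y ≤ 1 → pi3 p y < y) := by
  constructor
  · intro y h0 h1
    have key : pi3 p y - y = (1 / 2 - y) * (2 * (2 * p - 1) * (y ^ 2 - y) + (2 - 2 * p)) := by
      unfold pi3; ring
    nlinarith [sq_nonneg (y - 1/2), sq_nonneg y, mul_pos (sub_pos.2 h1)
      (show (0:ℝ) < 2 * (2 * p - 1) * (y ^ 2 - y) + (2 - 2 * p) by
        nlinarith [sq_nonneg (y - 1/2)])]
  · intro y h1 h2
    have key : pi3 p y - y = (1 / 2 - y) * (2 * (2 * p - 1) * (y ^ 2 - y) + (2 - 2 * p)) := by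
      unfold pi3; ring
    nlinarith [mul_pos (sub_pos.2 h1)
      (show (0:ℝ) < 2 * (2 * p - 1) * (y ^ 2 - y) + (2 - 2 * p) by
        nlinarith [sq_nonneg (y - 1/2)])]
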